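/- Let n ≥ 2, f > 0, and λ₁, ..., λₙ be real numbers with Σᵢ arctan(λᵢ/f) = (n-2)π/2. Then Σᵢ (f/(f²+λᵢ²)) · λᵢ ≥ 0. -/

import Mathlib

open Real Finset

/-- Chord bound from concavity of `sin` on `[0, π]`: for `a ≤ θ ≤ π/2` with `0 ≤ a < π/2`,
`sin (2θ)` lies above the chord from `(2a, sin 2a)` to `(π, 0)`. -/
lemma chord_aux (a θ : ℝ) (ha0 : 0 ≤ a) (haθ : a ≤ θ) (hθ : θ ≤ π / 2) (ha : a < π / 2) :
    Real.sin (2 * a) * ((π - 2 * θ) / (π - 2 * a)) ≤ Real.sin (2 * θ) := by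
  have hcon := strictConcaveOn_sin_Icc.concaveOn
  have hden : 0 < π - 2 * a := by linarith
  have ht : 0 ≤ (π - 2 * θ) / (π - 2 * a) := div_nonneg (by linarith) hden.le
  have hs : 0 ≤ (2 * θ - 2 * a) / (π - 2 * a) := div_nonneg (by linarith) hden.le
  have hts : (π - 2 * θ) / (π - 2 * a) + (2 * θ - 2 * a) / (π - 2 * a) = 1 := by
    field_simp
    ring
  have hx : (2 * a) ∈ Set.Icc (0 : ℝ) π := ⟨by linarith, by linarith⟩
  have hy : π ∈ Set.Icc (0 : ℝ) π := ⟨Real.pi_pos.le, le_refl _⟩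
  have h := hcon.2 hx hy ht hs hts
  simp only [smul_eq_mul, Real.sin_pi, mul_zero, add_zero] at h
  have hxy : (π - 2 * θ) / (π - 2 * a) * (2 * a) + (2 * θ - 2 * a) / (π - 2 * a) * π
      = 2 * θ := by
    field_simp
    ring
  rw [hxy] at h
  linarith [h]

lemma sin_two_arctan_div (f x : ℝ) (hf : 0 < f) :
    f / (f ^ 2 + x ^ 2) * x = Real.sin (2 * Real.arctan (x / f)) / 2 := by
  rw [Real.sin_two_mul, Real.sin_arctan, Real.cos_arctan]
  have h1 : (0:ℝ) < 1 + (x / f) ^ 2 := by positivity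
  have hsq : Real.sqrt (1 + (x / f) ^ 2) * Real.sqrt (1 + (x / f) ^ 2)
      = 1 + (x / f) ^ 2 := Real.mul_self_sqrt h1.le
  have hs : (0:ℝ) < Real.sqrt (1 + (x / f) ^ 2) := Real.sqrt_pos.2 h1
  have hfx : (0:ℝ) < f ^ 2 + x ^ 2 := by positivity
  field_simp
  rw [Real.sq_sqrt (by positivity)]
  field_simp

theorem stmt_8 (n : ℕ) (hn : 2 ≤ n) (f : ℝ) (hf : 0 < f)
    (lam : Fin n → ℝ)
    (hsum : ∑ i, Real.arctan (lam i / f) = ((n : ℝ) - 2) * Real.pi / 2) :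
    0 ≤ ∑ i, f / (f ^ 2 + lam i ^ 2) * lam i := by
  set θ : Fin n → ℝ := fun i => Real.arctan (lam i / f) with hθdef
  have hub : ∀ i, θ i < π / 2 := fun i => Real.arctan_lt_pi_div_two _
  have hlb : ∀ i, -(π / 2) < θ i := fun i => Real.neg_pi_div_two_lt_arctan _
  have hrw : ∀ i, f / (f ^ 2 + lam i ^ 2) * lam i = Real.sin (2 * θ i) / 2 := fun i =>
    sin_two_arctan_div f (lam i) hf
  rw [Finset.sum_congr rfl (fun i _ => hrw i)]
  rw [← Finset.sum_div]
  have key : 0 ≤ ∑ i, Real.sin (2 * θ i) := by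
    by_cases hpos : ∀ i, 0 ≤ θ i
    · apply Finset.sum_nonneg
      intro i _
      apply Real.sin_nonneg_of_nonneg_of_le_pi
      · linarith [hpos i]
      · linarith [hub i]
    · push_neg at hpos
      obtain ⟨k, hk⟩ := hpos
      set a : ℝ := -θ k with hadef
      have ha0 : 0 < a := by simp [hadef]; linarith
      have ha2 : a < π / 2 := by simp only [hadef]; linarith [hlb k]
      -- every other θ j is ≥ a
      have hge : ∀ j ∈ Finset.univ.erase k, a ≤ θ j := by
        intro j hj
        have hjk : j ≠ k := Finset.ne_of_mem_erase hj
        have hsub : ({j, k} : Finset (Fin n)) ⊆ Finset.univ := Finset.subset_univ _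
        have hsplit := Finset.sum_sdiff (f := θ) hsub
        have hpair : ∑ i ∈ ({j, k} : Finset (Fin n)), θ i = θ j + θ k :=
          Finset.sum_pair hjk
        have hcard : (Finset.univ \ ({j, k} : Finset (Fin n))).card = n - 2 := by
          rw [Finset.card_sdiff_of_subset hsub, Finset.card_univ, Fintype.card_fin,
            Finset.card_insert_of_notMem (by simpa using hjk), Finset.card_singleton]
        have hbound : ∑ i ∈ Finset.univ \ ({j, k} : Finset (Fin n)), θ i
            ≤ ((n : ℝ) - 2) * (π / 2) := by
          calc ∑ i ∈ Finset.univ \ ({j, k} : Finset (Fin n)), θ i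
              ≤ ∑ i ∈ Finset.univ \ ({j, k} : Finset (Fin n)), (π / 2) :=
                Finset.sum_le_sum (fun i _ => (hub i).le)
            _ = ((n : ℝ) - 2) * (π / 2) := by
                rw [Finset.sum_const, hcard, nsmul_eq_mul]
                congr 1
                have : (2 : ℕ) ≤ n := hn
                push_cast [Nat.cast_sub this]
                ring
        have : θ j + θ k ≥ 0 := by
          have := hsplit
          rw [hpair] at this
          rw [hθdef] at hsum
          nlinarith [hbound, this, hsum]
        simp only [hadef]
        linarith
      -- sum over the erase
      have hsum_erase : ∑ j ∈ Finset.univ.erase k, θ j = ((n : ℝ) - 2) * π / 2 + a := by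
        have := Finset.sum_erase_add Finset.univ θ (Finset.mem_univ k)
        rw [hθdef] at hsum
        simp only [hadef]
        linarith [this, hsum]
      have hcard_erase : (Finset.univ.erase k).card = n - 1 := by
        rw [Finset.card_erase_of_mem (Finset.mem_univ k), Finset.card_univ, Fintype.card_fin]
      have hden : 0 < π - 2 * a := by linarith
      have hchord : ∀ j ∈ Finset.univ.erase k,
          Real.sin (2 * a) * ((π - 2 * θ j) / (π - 2 * a)) ≤ Real.sin (2 * θ j) := by
        intro j hj
        exact chord_aux a (θ j) ha0.le (hge j hj) (hub j).le ha2
      have hlower : Real.sin (2 * a) ≤ ∑ j ∈ Finset.univ.erase k, Real.sin (2 * θ j) := by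
        have h1 : ∑ j ∈ Finset.univ.erase k, Real.sin (2 * a) * ((π - 2 * θ j) / (π - 2 * a))
            ≤ ∑ j ∈ Finset.univ.erase k, Real.sin (2 * θ j) :=
          Finset.sum_le_sum hchord
        have h2 : ∑ j ∈ Finset.univ.erase k, Real.sin (2 * a) * ((π - 2 * θ j) / (π - 2 * a))
            = Real.sin (2 * a) := by
          rw [← Finset.mul_sum]
          have hnum : ∑ j ∈ Finset.univ.erase k, (π - 2 * θ j) = π - 2 * a := by
            rw [Finset.sum_sub_distrib, Finset.sum_const, hcard_erase, nsmul_eq_mul,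
              ← Finset.mul_sum, hsum_erase]
            have : (1 : ℕ) ≤ n := by omega
            push_cast [Nat.cast_sub this]
            ring
          rw [← Finset.sum_div, hnum, div_self hden.ne', mul_one]
        linarith
      have hsplit := Finset.sum_erase_add Finset.univ (fun i => Real.sin (2 * θ i))
        (Finset.mem_univ k)
      have hsink : Real.sin (2 * θ k) = -Real.sin (2 * a) := by
        simp only [hadef]
        rw [show (2 : ℝ) * θ k = -(2 * -θ k) by ring, Real.sin_neg]
      have hsplit' : (∑ x ∈ Finset.univ.erase k, Real.sin (2 * θ x)) + Real.sin (2 * θ k)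
          = ∑ x : Fin n, Real.sin (2 * θ x) := hsplit
      linarith [hsplit', hlower, hsink]
  positivity
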